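/- Let $g : \mathbb{Z} \to \mathbb{R}$ and suppose $u = g \circ \phi$ is $p$-harmonic ($\Delta_p u(x) = 0$ for all $x \in G_k$). Then the sequence $g$ is monotone: either $g(n+1) \ge g(n)$ for all $n \in \mathbb{Z}$, or $g(n+1) \le g(n)$ for all $n \in \mathbb{Z}$. -/

import Mathlib

open scoped BigOperators

noncomputable section

/-- The group representation `G_k` of the Cayley tree of order `k`:
the free product of `k+1` copies of the cyclic group of order two. -/
abbrev G (k : ℕ) : Type := Monoid.CoprodI (fun _ : Fin (k + 1) => Multiplicative (ZMod 2))

/-- The generators `a_0, ..., a_k` of `G_k`. -/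
def gen (k : ℕ) (s : Fin (k + 1)) : G k :=
  Monoid.CoprodI.of (i := s) (Multiplicative.ofAdd (1 : ZMod 2))

/-- `φ_p(t) = |t|^(p-2) t` (real powers). -/
noncomputable def phiP (p t : ℝ) : ℝ := |t| ^ (p - 2) * t

/-- The discrete `p`-Laplacian on the Cayley tree with resistances `r`:
`Δ_p u (x) = ∑_{s=0}^{k} φ_p ((u (x a_s) - u x) / r (x, x a_s))`. -/
noncomputable def pLap (k : ℕ) (p : ℝ) (r : G k × G k → ℝ) (u : G k → ℝ) (x : G k) : ℝ :=
  ∑ s : Fin (k + 1), phiP p ((u (x * gen k s) - u x) / r (x, x * gen k s))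

/-- A function `u : G_k → ℝ` is `H`-periodic if `u (y x) = u x` for all `y ∈ H`, `x ∈ G_k`. -/
def IsPeriodic (k : ℕ) (H : Subgroup (G k)) (u : G k → ℝ) : Prop :=
  ∀ y ∈ H, ∀ x : G k, u (y * x) = u x

/-- The coset index `φ(x) = ρ(x)(0)` associated to a permutation action `ρ` of `G_k` on `ℤ`. -/
def cosetIdx {k : ℕ} (ρ : G k →* Equiv.Perm ℤ) (x : G k) : ℤ := ρ x 0

lemma phiP_of_nonneg {p : ℝ} (hp : 1 < p) {t : ℝ} (ht : 0 ≤ t) :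
    phiP p t = t ^ (p - 1) := by
  rcases ht.eq_or_lt with rfl | h
  · simp [phiP, Real.zero_rpow (sub_ne_zero.mpr hp.ne')]
  · unfold phiP
    rw [abs_of_pos h]
    calc t ^ (p-2) * t = t ^ (p-2) * t ^ (1:ℝ) := by rw [Real.rpow_one]
    _ = t ^ (p-2+1) := (Real.rpow_add h _ _).symm
    _ = t ^ (p-1) := by ring_nf

lemma phiP_neg (p t : ℝ) : phiP p (-t) = -phiP p t := by
  unfold phiP; rw [abs_neg]; ring

lemma phiP_strictMono {p : ℝ} (hp : 1 < p) : StrictMono (phiP p) := by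
  intro a b hab
  rcases le_or_gt 0 a with ha | ha
  · rw [phiP_of_nonneg hp ha, phiP_of_nonneg hp (ha.trans hab.le)]
    exact Real.rpow_lt_rpow ha hab (by linarith)
  rcases le_or_gt 0 b with hb | hb
  · have h1 : phiP p a < 0 := by
      have : phiP p a = -((-a) ^ (p-1)) := by
        have h := phiP_neg p (-a)
        rw [neg_neg] at h
        rw [h, phiP_of_nonneg hp (by linarith : (0:ℝ) ≤ -a)]
      rw [this]
      have := Real.rpow_pos_of_pos (by linarith : (0:ℝ) < -a) (p-1)
      linarith
    have h2 : 0 ≤ phiP p b := by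
      rw [phiP_of_nonneg hp hb]
      exact Real.rpow_nonneg hb _
    linarith
  · have ea : phiP p a = -((-a) ^ (p-1)) := by
      have h := phiP_neg p (-a)
      rw [neg_neg] at h
      rw [h, phiP_of_nonneg hp (by linarith : (0:ℝ) ≤ -a)]
    have eb : phiP p b = -((-b) ^ (p-1)) := by
      have h := phiP_neg p (-b)
      rw [neg_neg] at h
      rw [h, phiP_of_nonneg hp (by linarith : (0:ℝ) ≤ -b)]
    rw [ea, eb]
    have := Real.rpow_lt_rpow (by linarith : (0:ℝ) ≤ -b) (by linarith : -b < -a)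
      (by linarith : 0 < p - 1)
    linarith

lemma phiP_zero (p : ℝ) : phiP p 0 = 0 := by simp [phiP]

theorem stmt11 (k : ℕ) (hk : 1 ≤ k) (p : ℝ) (hp1 : 1 < p)
    (r : G k × G k → ℝ) (hr_symm : ∀ x y : G k, r (x, y) = r (y, x)) (hr_pos : ∀ x y : G k, 0 < r (x, y))
    (i j : Fin (k + 1)) (hij : i ≠ j)
    (ρ : G k →* Equiv.Perm ℤ)
    (hρi : ∀ n : ℤ, ρ (gen k i) n = 1 - n)
    (hρj : ∀ n : ℤ, ρ (gen k j) n = -1 - n)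
    (hρs : ∀ s : Fin (k + 1), s ≠ i → s ≠ j → ρ (gen k s) = 1)
    (ϱ : ℤ → ℝ) (hϱ_pos : ∀ n : ℤ, 0 < ϱ n)
    (hrϱ : ∀ x y : G k, cosetIdx ρ y = cosetIdx ρ x + 1 → r (x, y) = ϱ (cosetIdx ρ x))
    (g : ℤ → ℝ) (hharm : ∀ x : G k, pLap k p r (fun x => g (cosetIdx ρ x)) x = 0) :
    (∀ n : ℤ, g n ≤ g (n + 1)) ∨ (∀ n : ℤ, g (n + 1) ≤ g n) := by
  have hinj : Function.Injective (phiP p) := (phiP_strictMono hp1).injective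
  have hmul : ∀ (x : G k) (s : Fin (k+1)),
      cosetIdx ρ (x * gen k s) = ρ x (ρ (gen k s) 0) := by
    intro x s
    simp [cosetIdx, map_mul]
  -- the generic computation of the p-Laplacian at a point
  have main : ∀ (x : G k) (i' j' : Fin (k+1)), i' ≠ j' →
      (∀ s : Fin (k+1), s ≠ i' → s ≠ j' → cosetIdx ρ (x * gen k s) = cosetIdx ρ x) →
      cosetIdx ρ (x * gen k i') = cosetIdx ρ x + 1 →
      cosetIdx ρ (x * gen k j') = cosetIdx ρ x - 1 →
      phiP p ((g (cosetIdx ρ x + 1) - g (cosetIdx ρ x)) / ϱ (cosetIdx ρ x))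
        + phiP p ((g (cosetIdx ρ x - 1) - g (cosetIdx ρ x)) / ϱ (cosetIdx ρ x - 1)) = 0 := by
    intro x i' j' hij' hs h1 h2
    have hsum : ∑ s ∈ ({i', j'} : Finset (Fin (k+1))),
        phiP p ((g (cosetIdx ρ (x * gen k s)) - g (cosetIdx ρ x)) / r (x, x * gen k s)) = 0 := by
      rw [Finset.sum_subset (Finset.subset_univ _)]
      · simpa [pLap] using hharm x
      · intro s _ hsmem
        simp only [Finset.mem_insert, Finset.mem_singleton] at hsmem
        push_neg at hsmem
        rw [hs s hsmem.1 hsmem.2, sub_self, zero_div, phiP_zero]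
    rw [Finset.sum_pair hij'] at hsum
    have hri : r (x, x * gen k i') = ϱ (cosetIdx ρ x) := hrϱ x _ h1
    have hrj : r (x, x * gen k j') = ϱ (cosetIdx ρ x - 1) := by
      rw [hr_symm, hrϱ (x * gen k j') x (by omega), h2]
    rw [h1, h2, hri, hrj] at hsum
    exact hsum
  -- computing the permutations
  have hwapp : ∀ m : ℤ, ρ (gen k i * gen k j) m = m + 2 := by
    intro m
    rw [map_mul, Equiv.Perm.mul_apply, hρj, hρi]
    ring
  have hwinv : ∀ m : ℤ, (ρ (gen k i * gen k j))⁻¹ m = m - 2 := by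
    intro m
    have h : ρ (gen k i * gen k j) (m - 2) = m := by rw [hwapp]; ring
    calc (ρ (gen k i * gen k j))⁻¹ m
        = (ρ (gen k i * gen k j))⁻¹ (ρ (gen k i * gen k j) (m - 2)) := by rw [h]
      _ = m - 2 := by simp
  have hwt : ∀ (t m : ℤ), (ρ (gen k i * gen k j) ^ t) m = m + 2 * t := by
    intro t
    induction t using Int.induction_on with
    | zero => intro m; simp
    | succ t ih =>
      intro m
      rw [zpow_add_one, Equiv.Perm.mul_apply, hwapp, ih]
      ring
    | pred t ih =>
      intro m
      rw [show (-(t:ℤ) - 1) = (-(t:ℤ)) - 1 by ring, zpow_sub_one, Equiv.Perm.mul_apply,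
        hwinv, ih]
      ring
  -- the key identity for every level n
  have key : ∀ n : ℤ,
      phiP p ((g (n + 1) - g n) / ϱ n) + phiP p ((g (n - 1) - g n) / ϱ (n - 1)) = 0 := by
    intro n
    rcases Int.even_or_odd n with ⟨t, ht⟩ | ⟨t, ht⟩
    · -- n = 2t : use x = (a_i a_j)^t
      set x : G k := (gen k i * gen k j) ^ t with hxdef
      have hx : ∀ m : ℤ, ρ x m = m + 2 * t := by
        intro m
        rw [hxdef, map_zpow]
        exact hwt t m
      have hxn : cosetIdx ρ x = n := by
        rw [cosetIdx, hx]; omega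
      have h1 : cosetIdx ρ (x * gen k i) = cosetIdx ρ x + 1 := by
        rw [hmul, hρi, hx, hxn]; omega
      have h2 : cosetIdx ρ (x * gen k j) = cosetIdx ρ x - 1 := by
        rw [hmul, hρj, hx, hxn]; omega
      have hothers : ∀ s : Fin (k+1), s ≠ i → s ≠ j →
          cosetIdx ρ (x * gen k s) = cosetIdx ρ x := by
        intro s hsi hsj
        rw [hmul, hρs s hsi hsj]
        rfl
      have := main x i j hij hothers h1 h2
      rwa [hxn] at this
    · -- n = 2t + 1 : use x = a_i (a_i a_j)^(-t)
      set x : G k := gen k i * (gen k i * gen k j) ^ (-t) with hxdef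
      have hx : ∀ m : ℤ, ρ x m = 1 - (m - 2 * t) := by
        intro m
        rw [hxdef, map_mul, Equiv.Perm.mul_apply, map_zpow, hwt, hρi]
        ring_nf
      have hxn : cosetIdx ρ x = n := by
        rw [cosetIdx, hx]; omega
      have h1 : cosetIdx ρ (x * gen k j) = cosetIdx ρ x + 1 := by
        rw [hmul, hρj, hx, hxn]; omega
      have h2 : cosetIdx ρ (x * gen k i) = cosetIdx ρ x - 1 := by
        rw [hmul, hρi, hx, hxn]; omega
      have hothers : ∀ s : Fin (k+1), s ≠ j → s ≠ i →
          cosetIdx ρ (x * gen k s) = cosetIdx ρ x := by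
        intro s hsj hsi
        rw [hmul, hρs s hsi hsj]
        rfl
      have := main x j i hij.symm hothers h1 h2
      rwa [hxn] at this
  -- turn the identity into constancy of the normalized difference
  have key2 : ∀ n : ℤ, (g (n + 1) - g n) / ϱ n = (g n - g (n - 1)) / ϱ (n - 1) := by
    intro n
    have h := key n
    have heq : phiP p ((g (n + 1) - g n) / ϱ n)
        = phiP p (-((g (n - 1) - g n) / ϱ (n - 1))) := by
      rw [phiP_neg]; linarith
    have := hinj heq
    rw [this]; ring
  set d : ℤ → ℝ := fun n => (g (n + 1) - g n) / ϱ n with hddef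
  have hd : ∀ n : ℤ, d n = d (n - 1) := by
    intro n
    show (g (n + 1) - g n) / ϱ n = (g (n - 1 + 1) - g (n - 1)) / ϱ (n - 1)
    rw [show n - 1 + 1 = n by ring]
    exact key2 n
  have hconst : ∀ n : ℤ, d n = d 0 := by
    intro n
    induction n using Int.induction_on with
    | zero => rfl
    | succ t ih =>
      have h := hd ((t : ℤ) + 1)
      rw [show ((t:ℤ) + 1 - 1) = (t:ℤ) by ring] at h
      rw [h]; exact ih
    | pred t ih =>
      rw [show (-(t:ℤ) - 1) = (-(t:ℤ)) - 1 by ring, ← hd (-(t:ℤ))]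
      exact ih
  have hgd : ∀ n : ℤ, g (n + 1) - g n = d n * ϱ n := by
    intro n
    show g (n + 1) - g n = (g (n + 1) - g n) / ϱ n * ϱ n
    rw [div_mul_cancel₀ _ (hϱ_pos n).ne']
  rcases le_or_gt 0 (d 0) with h0 | h0
  · left
    intro n
    have h1 : 0 ≤ d n * ϱ n := mul_nonneg (by rw [hconst n]; exact h0) (hϱ_pos n).le
    have h2 := hgd n
    linarith
  · right
    intro n
    have h1 : d n * ϱ n ≤ 0 :=
      mul_nonpos_iff.mpr (Or.inr ⟨by rw [hconst n]; exact h0.le, (hϱ_pos n).le⟩)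
    have h2 := hgd n
    linarith
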